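/- Let k ≥ 2 and k < j ≤ n−1, and let H be the k-uniform threshold hypergraph with binary sequence whose first j−1 entries are 0 and whose last q = n−j+1 entries are 1. Then −C(n−2, k−2) is an eigenvalue of the adjacency matrix of H with multiplicity at least q − 1, and −(Σ_{i=1}^{q} C(n−(i+2), k−3)) is an eigenvalue with multiplicity at least j − 2. -/

import Mathlib

/-- Binomial coefficient with integer lower index; `bino m r = 0` when `r < 0`. -/
def bino (m : ℕ) (r : ℤ) : ℕ := if 0 ≤ r then m.choose r.toNat else 0

/-- `e` is an edge of the `k`-uniform threshold hypergraph on `Fin n` given by the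
binary sequence `b`: `e` is a `k`-subset whose maximal vertex `j` satisfies `b j = true`. -/
def isEdge (n k : ℕ) (b : Fin n → Bool) (e : Finset (Fin n)) : Prop :=
  e.card = k ∧ ∃ j ∈ e, (∀ i ∈ e, i ≤ j) ∧ b j = true

/-- Number of edges containing both vertices `x` and `y`. -/
noncomputable def edgeCount (n k : ℕ) (b : Fin n → Bool) (x y : Fin n) : ℕ :=
  Set.ncard {e : Finset (Fin n) | isEdge n k b e ∧ x ∈ e ∧ y ∈ e}

/-- The (ℕ-valued) adjacency matrix of the threshold hypergraph. -/
noncomputable def adjN (n k : ℕ) (b : Fin n → Bool) : Matrix (Fin n) (Fin n) ℕ :=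
  fun i j => if i = j then 0 else edgeCount n k b i j

/-- The real adjacency matrix of the threshold hypergraph. -/
noncomputable def adjMat (n k : ℕ) (b : Fin n → Bool) : Matrix (Fin n) (Fin n) ℝ :=
  fun i j => if i = j then 0 else (edgeCount n k b i j : ℝ)

/-- Dimension of the eigenspace of a real matrix `A` at eigenvalue `μ`. -/
noncomputable def eigMult (n : ℕ) (A : Matrix (Fin n) (Fin n) ℝ) (μ : ℝ) : ℕ :=
  Module.finrank ℝ (Module.End.eigenspace (Matrix.toLin' A) μ)

/-- `x ≪ y`: `x` may be replaced by `y` in any edge. -/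
def repl (n k : ℕ) (b : Fin n → Bool) (x y : Fin n) : Prop :=
  ∀ S : Finset (Fin n), S.card = k - 1 → x ∉ S → y ∉ S →
    isEdge n k b (insert x S) → isEdge n k b (insert y S)

section AuxLemmas
open Finset
lemma edgeCount_symm {n k : ℕ} (b : Fin n → Bool) (x y : Fin n) :
    edgeCount n k b x y = edgeCount n k b y x := by
  unfold edgeCount
  congr 1
  ext e
  simp only [Set.mem_setOf_eq]
  tauto

lemma count_pairs {n k : ℕ} (hk : 2 ≤ k) {x y : Fin n} (hxy : x ≠ y) {t : Finset (Fin n)}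
    (hx : x ∈ t) (hy : y ∈ t) :
    ((t.powersetCard k).filter (fun e => x ∈ e ∧ y ∈ e)).card
      = (t.card - 2).choose (k - 2) := by
  classical
  have hpair : ({x, y} : Finset (Fin n)).card = 2 := by
    rw [card_insert_of_notMem (by simp [hxy]), card_singleton]
  have key : ((t.powersetCard k).filter (fun e => x ∈ e ∧ y ∈ e)).card
      = ((t \ {x, y}).powersetCard (k - 2)).card := by
    apply Finset.card_bij' (fun e _ => e \ ({x, y} : Finset (Fin n)))
      (fun S _ => insert x (insert y S))
    · intro e he
      simp only [mem_filter, mem_powersetCard] at he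
      obtain ⟨⟨hsub, hcard⟩, hxe, hye⟩ := he
      have hps : ({x, y} : Finset (Fin n)) ⊆ e := by
        intro a ha
        simp only [mem_insert, mem_singleton] at ha
        rcases ha with rfl | rfl <;> assumption
      rw [mem_powersetCard]
      exact ⟨sdiff_subset_sdiff hsub (le_refl _), by rw [card_sdiff_of_subset hps, hpair, hcard]⟩
    · intro S hS
      rw [mem_powersetCard] at hS
      obtain ⟨hsub, hcard⟩ := hS
      have hxS : x ∉ S := fun h => by simpa using (hsub h)
      have hyS : y ∉ S := fun h => by simpa using (hsub h)
      simp only [mem_filter, mem_powersetCard]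
      refine ⟨⟨?_, ?_⟩, by simp, by simp⟩
      · intro a ha
        simp only [mem_insert] at ha
        rcases ha with rfl | rfl | ha
        · exact hx
        · exact hy
        · exact (sdiff_subset (hsub ha))
      · rw [card_insert_of_notMem (by simp [hxy, hxS]), card_insert_of_notMem hyS, hcard]
        omega
    · intro e he
      simp only [mem_filter, mem_powersetCard] at he
      obtain ⟨_, hxe, hye⟩ := he
      ext a
      simp only [mem_insert, mem_sdiff, mem_singleton]
      constructor
      · rintro (rfl | rfl | ⟨h, _⟩) <;> first | exact hxe | exact hye | exact h
      · intro ha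
        by_cases h1 : a = x
        · exact Or.inl h1
        · by_cases h2 : a = y
          · exact Or.inr (Or.inl h2)
          · exact Or.inr (Or.inr ⟨ha, by simp [h1, h2]⟩)
    · intro S hS
      rw [mem_powersetCard] at hS
      obtain ⟨hsub, _⟩ := hS
      have hxS : x ∉ S := fun h => by simpa using (hsub h)
      have hyS : y ∉ S := fun h => by simpa using (hsub h)
      ext a
      simp only [mem_sdiff, mem_insert, mem_singleton]
      constructor
      · rintro ⟨rfl | rfl | ha, h⟩
        · exact absurd (Or.inl rfl) h
        · exact absurd (Or.inr rfl) h
        · exact ha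
      · intro ha
        refine ⟨Or.inr (Or.inr ha), ?_⟩
        rintro (rfl | rfl) <;> tauto
  have hps : ({x, y} : Finset (Fin n)) ⊆ t := by
    intro a ha
    simp only [mem_insert, mem_singleton] at ha
    rcases ha with rfl | rfl <;> assumption
  rw [key, Finset.card_powersetCard, card_sdiff_of_subset hps, hpair]

lemma card_filter_ico (n a c : ℕ) (hc : c ≤ n) :
    ((univ : Finset (Fin n)).filter (fun i : Fin n => a ≤ (i : ℕ) ∧ (i : ℕ) < c)).card = c - a := by
  rw [← Nat.card_Ico a c]
  apply Finset.card_bij (fun (i : Fin n) _ => (i : ℕ))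
  · intro i hi
    simp only [mem_filter] at hi
    simp only [Finset.mem_Ico]
    exact hi.2
  · intro i _ i' _ h
    exact Fin.val_injective h
  · intro m hm
    simp only [Finset.mem_Ico] at hm
    refine ⟨⟨m, lt_of_lt_of_le hm.2 hc⟩, ?_, rfl⟩
    simp [mem_filter, hm.1, hm.2]

lemma edgeCount_hi {n k j : ℕ} (hk : 2 ≤ k) {x y : Fin n} (hxy : x ≠ y)
    (hy : j - 1 ≤ (y : ℕ)) :
    edgeCount n k (fun i => decide (j - 1 ≤ (i : ℕ))) x y = (n - 2).choose (k - 2) := by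
  classical
  have hset : {e : Finset (Fin n) | isEdge n k (fun i => decide (j - 1 ≤ (i : ℕ))) e ∧ x ∈ e ∧ y ∈ e}
      = ↑(((univ : Finset (Fin n)).powersetCard k).filter (fun e => x ∈ e ∧ y ∈ e)) := by
    ext e
    simp only [Set.mem_setOf_eq, coe_filter, mem_powersetCard, subset_univ, true_and]
    constructor
    · rintro ⟨⟨hc, _⟩, hx', hy'⟩
      exact ⟨hc, hx', hy'⟩
    · rintro ⟨hc, hx', hy'⟩
      refine ⟨⟨hc, ?_⟩, hx', hy'⟩
      have hne : e.Nonempty := ⟨y, hy'⟩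
      refine ⟨e.max' hne, e.max'_mem hne, fun i hi => e.le_max' i hi, ?_⟩
      simp only [decide_eq_true_eq]
      exact le_trans hy (e.le_max' y hy')
  rw [edgeCount, hset, Set.ncard_coe_finset,
    count_pairs hk hxy (mem_univ x) (mem_univ y), card_univ, Fintype.card_fin]

lemma edgeCount_lo {n k j : ℕ} (hk : 2 ≤ k) (hj : j - 1 ≤ n) {x y : Fin n} (hxy : x ≠ y)
    (hx : (x : ℕ) < j - 1) (hy : (y : ℕ) < j - 1) :
    edgeCount n k (fun i => decide (j - 1 ≤ (i : ℕ))) x y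
      = (n - 2).choose (k - 2) - (j - 3).choose (k - 2) := by
  classical
  set T : Finset (Fin n) := (univ : Finset (Fin n)).filter (fun i : Fin n => (i : ℕ) < j - 1)
    with hT
  have hxT : x ∈ T := by simp [hT, hx]
  have hyT : y ∈ T := by simp [hT, hy]
  have hTcard : T.card = j - 1 := by
    have := card_filter_ico n 0 (j - 1) hj
    simpa [hT] using this
  set F : Finset (Finset (Fin n)) :=
    ((univ : Finset (Fin n)).powersetCard k).filter (fun e => x ∈ e ∧ y ∈ e) with hF
  set F' : Finset (Finset (Fin n)) :=
    (T.powersetCard k).filter (fun e => x ∈ e ∧ y ∈ e) with hF'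
  have hsub : F' ⊆ F := by
    apply filter_subset_filter
    exact powersetCard_mono (subset_univ T)
  have hset : {e : Finset (Fin n) | isEdge n k (fun i => decide (j - 1 ≤ (i : ℕ))) e ∧ x ∈ e ∧ y ∈ e}
      = ↑(F \ F') := by
    ext e
    simp only [Set.mem_setOf_eq, coe_sdiff, Set.mem_diff, mem_coe, hF, hF',
      mem_filter, mem_powersetCard, subset_univ, true_and]
    constructor
    · rintro ⟨⟨hc, m, hme, hmax, hbm⟩, hx', hy'⟩
      simp only [decide_eq_true_eq] at hbm
      refine ⟨⟨hc, hx', hy'⟩, ?_⟩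
      rintro ⟨⟨hsubT, _⟩, -, -⟩
      have := hsubT hme
      simp only [hT, mem_filter] at this
      omega
    · rintro ⟨⟨hc, hx', hy'⟩, hne⟩
      refine ⟨⟨hc, ?_⟩, hx', hy'⟩
      have hnsub : ¬ e ⊆ T := by
        intro hsubT
        exact hne ⟨⟨hsubT, hc⟩, hx', hy'⟩
      obtain ⟨m, hme, hmT⟩ := not_subset.mp hnsub
      have hm : j - 1 ≤ (m : ℕ) := by
        simp only [hT, mem_filter, mem_univ, true_and] at hmT
        omega
      have hne' : e.Nonempty := ⟨m, hme⟩
      refine ⟨e.max' hne', e.max'_mem hne', fun i hi => e.le_max' i hi, ?_⟩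
      simp only [decide_eq_true_eq]
      exact le_trans hm (e.le_max' m hme)
  rw [edgeCount, hset, Set.ncard_coe_finset, card_sdiff_of_subset hsub,
    count_pairs hk hxy (mem_univ x) (mem_univ y), count_pairs hk hxy hxT hyT,
    card_univ, Fintype.card_fin, hTcard]
  congr 2

lemma sum_identity {n k j : ℕ} (hk : 2 ≤ k) (hkj : k < j) (hjn : j + 1 ≤ n) :
    (n - 2).choose (k - 2) - (j - 3).choose (k - 2)
      = ∑ i ∈ Finset.Icc 1 (n - j + 1), bino (n - (i + 2)) ((k : ℤ) - 3) := by
  by_cases hk2 : k = 2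
  · subst hk2
    simp [bino]
  · have hk3 : 3 ≤ k := by omega
    have hj4 : 4 ≤ j := by omega
    have hb : ∀ i ∈ Finset.Icc 1 (n - j + 1), bino (n - (i + 2)) ((k : ℤ) - 3)
        = (n - (i + 2)).choose (k - 3) := by
      intro i _
      unfold bino
      rw [if_pos (by omega)]
      congr 1
      omega
    rw [Finset.sum_congr rfl hb]
    have hre : ∑ i ∈ Finset.Icc 1 (n - j + 1), (n - (i + 2)).choose (k - 3)
        = ∑ m ∈ Finset.Icc (j - 3) (n - 3), m.choose (k - 3) := by
      apply Finset.sum_nbij' (fun i => n - (i + 2)) (fun m => n - (m + 2))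
      · intro a ha
        simp only [Finset.mem_Icc] at ha ⊢
        omega
      · intro a ha
        simp only [Finset.mem_Icc] at ha ⊢
        omega
      · intro a ha
        simp only [Finset.mem_Icc] at ha
        omega
      · intro a ha
        simp only [Finset.mem_Icc] at ha
        omega
      · intro a _
        rfl
    rw [hre]
    have h1 : ∑ m ∈ Finset.Icc (k - 3) (n - 3), m.choose (k - 3) = (n - 2).choose (k - 2) := by
      rw [Nat.sum_Icc_choose]
      congr 1 <;> omega
    have h2 : ∑ m ∈ Finset.Icc (k - 3) (j - 4), m.choose (k - 3) = (j - 3).choose (k - 2) := by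
      rw [Nat.sum_Icc_choose]
      congr 1 <;> omega
    have hsplit : ∑ m ∈ Finset.Icc (k - 3) (j - 4), m.choose (k - 3)
        + ∑ m ∈ Finset.Icc (j - 3) (n - 3), m.choose (k - 3)
        = ∑ m ∈ Finset.Icc (k - 3) (n - 3), m.choose (k - 3) := by
      rw [← Finset.Ico_add_one_right_eq_Icc (k - 3) (j - 4), ← Finset.Ico_add_one_right_eq_Icc (j - 3) (n - 3),
        ← Finset.Ico_add_one_right_eq_Icc (k - 3) (n - 3), show j - 4 + 1 = j - 3 by omega]
      exact Finset.sum_Ico_consecutive _ (by omega) (by omega)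
    omega

lemma twin_mulVec {n : ℕ} (A : Matrix (Fin n) (Fin n) ℝ) (x y : Fin n) (c : ℝ)
    (hne : x ≠ y)
    (hxx : A x x = 0) (hyy : A y y = 0) (hxy : A x y = c) (hyx : A y x = c)
    (htwin : ∀ z, z ≠ x → z ≠ y → A z x = A z y) :
    (Pi.single x 1 - Pi.single y 1 : Fin n → ℝ) ∈
      Module.End.eigenspace (Matrix.toLin' A) (-c) := by
  rw [Module.End.mem_eigenspace_iff, Matrix.toLin'_apply]
  have hmv : A.mulVec (Pi.single x 1 - Pi.single y 1) = fun z => A z x - A z y := by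
    funext z
    simp only [Matrix.mulVec, dotProduct, Pi.sub_apply, Pi.single_apply, mul_sub,
      mul_ite, mul_one, mul_zero, Finset.sum_sub_distrib, Finset.sum_ite_eq', mem_univ, if_true]
  rw [hmv]
  funext z
  simp only [Pi.smul_apply, Pi.sub_apply, Pi.single_apply, smul_eq_mul]
  by_cases hzx : z = x
  · subst hzx
    rw [if_pos rfl, if_neg hne, hxx, hxy]
    ring
  · by_cases hzy : z = y
    · subst hzy
      rw [if_neg hzx, if_pos rfl, hyy, hyx]
      ring
    · rw [if_neg hzx, if_neg hzy, htwin z hzx hzy]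
      ring

lemma indep_single_sub {n : ℕ} (S : Finset (Fin n)) (x0 : Fin n) (hx0 : x0 ∉ S) :
    LinearIndependent ℝ
      (fun x : S => (Pi.single (x : Fin n) 1 - Pi.single x0 1 : Fin n → ℝ)) := by
  rw [Fintype.linearIndependent_iff]
  intro g hg x
  have hx0x : (x : Fin n) ≠ x0 := by
    intro h
    exact hx0 (h ▸ x.2)
  have := congrFun hg (x : Fin n)
  simp only [Finset.sum_apply, Pi.smul_apply, Pi.sub_apply, Pi.single_apply,
    smul_eq_mul, Pi.zero_apply, if_neg hx0x, sub_zero, mul_ite, mul_one, mul_zero] at this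
  rw [Finset.sum_congr rfl (fun w _ => if_congr
    ⟨fun h => Subtype.ext h.symm, fun h => by rw [h]⟩ rfl rfl)] at this
  rwa [Finset.sum_ite_eq' Finset.univ x g, if_pos (Finset.mem_univ x)] at this

lemma finrank_lower_bound {n : ℕ} (A : Matrix (Fin n) (Fin n) ℝ) (μ : ℝ)
    (S : Finset (Fin n)) (x0 : Fin n) (hx0 : x0 ∉ S)
    (hmem : ∀ x ∈ S, (Pi.single x 1 - Pi.single x0 1 : Fin n → ℝ) ∈
      Module.End.eigenspace (Matrix.toLin' A) μ) :
    S.card ≤ Module.finrank ℝ (Module.End.eigenspace (Matrix.toLin' A) μ) := by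
  set E := Module.End.eigenspace (Matrix.toLin' A) μ
  have hind : LinearIndependent ℝ
      (fun x : S => (⟨Pi.single (x : Fin n) 1 - Pi.single x0 1, hmem x x.2⟩ : E)) := by
    have h2 := indep_single_sub S x0 hx0
    apply LinearIndependent.of_comp E.subtype
    exact h2
  calc S.card = Fintype.card S := (Fintype.card_coe S).symm
    _ ≤ Module.finrank ℝ E := hind.fintype_card_le_finrank

end AuxLemmas

/-- For the `k`-uniform threshold hypergraph whose binary sequence has its first
`j - 1` entries `0` and its last `q = n - j + 1` entries `1` (`k < j ≤ n - 1`):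
`-C(n-2, k-2)` is an eigenvalue of the adjacency matrix with multiplicity at least
`q - 1`, and `-(Σ_{i=1}^{q} C(n-(i+2), k-3))` is an eigenvalue with multiplicity at
least `j - 2`. -/
theorem two_blocks_eigenvalues (n k j : ℕ) (hk : 2 ≤ k) (hkj : k < j) (hjn : j ≤ n - 1) :
    (n - j + 1) - 1 ≤
      eigMult n (adjMat n k (fun i => decide (j - 1 ≤ (i : ℕ))))
        (-(((n - 2).choose (k - 2) : ℕ) : ℝ)) ∧
    j - 2 ≤
      eigMult n (adjMat n k (fun i => decide (j - 1 ≤ (i : ℕ))))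
        (-((∑ i ∈ Finset.Icc 1 (n - j + 1), bino (n - (i + 2)) ((k : ℤ) - 3) : ℕ) : ℝ)) := by
  have hn : j + 1 ≤ n := by omega
  set b : Fin n → Bool := fun i => decide (j - 1 ≤ (i : ℕ)) with hb
  set A : Matrix (Fin n) (Fin n) ℝ := adjMat n k b with hA
  have hAoff : ∀ z w : Fin n, z ≠ w → A z w = (edgeCount n k b z w : ℝ) := by
    intro z w h
    simp [hA, adjMat, h]
  have hAdiag : ∀ z : Fin n, A z z = 0 := by
    intro z
    simp [hA, adjMat]
  constructor
  · -- eigenvalue -C(n-2, k-2), multiplicity ≥ q - 1 = n - j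
    set x0 : Fin n := ⟨j - 1, by omega⟩ with hx0def
    set S : Finset (Fin n) :=
      Finset.univ.filter (fun i : Fin n => j ≤ (i : ℕ) ∧ (i : ℕ) < n) with hSdef
    have hScard : S.card = n - j := card_filter_ico n j n (le_refl n)
    have hx0S : x0 ∉ S := by
      simp only [hSdef, Finset.mem_filter, Finset.mem_univ, true_and, hx0def]
      omega
    have hbound := finrank_lower_bound A (-(((n - 2).choose (k - 2) : ℕ) : ℝ)) S x0 hx0S ?_
    · calc (n - j + 1) - 1 = n - j := by omega
        _ = S.card := hScard.symm
        _ ≤ _ := hbound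
    · intro x hxS
      simp only [hSdef, Finset.mem_filter, Finset.mem_univ, true_and] at hxS
      have hne : x ≠ x0 := by
        intro h
        rw [h] at hxS
        simp only [hx0def] at hxS
        omega
      have hx0v : (x0 : ℕ) = j - 1 := rfl
      apply twin_mulVec A x x0 _ hne (hAdiag x) (hAdiag x0)
      · rw [hAoff x x0 hne]
        norm_cast
        exact edgeCount_hi hk hne (by omega)
      · rw [hAoff x0 x hne.symm]
        norm_cast
        exact edgeCount_hi hk hne.symm (by omega)
      · intro z hzx hzx0
        rw [hAoff z x hzx, hAoff z x0 hzx0]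
        norm_cast
        rw [edgeCount_hi hk hzx (by omega), edgeCount_hi hk hzx0 (by omega)]
  · -- eigenvalue -(sum), multiplicity ≥ j - 2
    have hsum : (∑ i ∈ Finset.Icc 1 (n - j + 1), bino (n - (i + 2)) ((k : ℤ) - 3))
        = (n - 2).choose (k - 2) - (j - 3).choose (k - 2) :=
      (sum_identity hk hkj hn).symm
    rw [hsum]
    set cN : ℕ := (n - 2).choose (k - 2) - (j - 3).choose (k - 2) with hcN
    set x0 : Fin n := ⟨0, by omega⟩ with hx0def
    set S : Finset (Fin n) :=
      Finset.univ.filter (fun i : Fin n => 1 ≤ (i : ℕ) ∧ (i : ℕ) < j - 1) with hSdef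
    have hScard : S.card = j - 1 - 1 := card_filter_ico n 1 (j - 1) (by omega)
    have hx0S : x0 ∉ S := by
      simp only [hSdef, Finset.mem_filter, Finset.mem_univ, true_and, hx0def]
      omega
    have hbound := finrank_lower_bound A (-((cN : ℕ) : ℝ)) S x0 hx0S ?_
    · calc j - 2 = j - 1 - 1 := by omega
        _ = S.card := hScard.symm
        _ ≤ _ := hbound
    · intro x hxS
      simp only [hSdef, Finset.mem_filter, Finset.mem_univ, true_and] at hxS
      have hx0v : (x0 : ℕ) = 0 := rfl
      have hne : x ≠ x0 := by
        intro h
        rw [h] at hxS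
        omega
      have hxlt : (x : ℕ) < j - 1 := hxS.2
      have hx0lt : (x0 : ℕ) < j - 1 := by omega
      have hjle : j - 1 ≤ n := by omega
      apply twin_mulVec A x x0 _ hne (hAdiag x) (hAdiag x0)
      · rw [hAoff x x0 hne]
        norm_cast
        exact edgeCount_lo hk hjle hne hxlt hx0lt
      · rw [hAoff x0 x hne.symm]
        norm_cast
        exact edgeCount_lo hk hjle hne.symm hx0lt hxlt
      · intro z hzx hzx0
        rw [hAoff z x hzx, hAoff z x0 hzx0]
        norm_cast
        by_cases hz : (z : ℕ) < j - 1
        · rw [edgeCount_lo hk hjle hzx hz hxlt, edgeCount_lo hk hjle hzx0 hz hx0lt]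
        · rw [edgeCount_symm b z x, edgeCount_symm b z x0,
            edgeCount_hi hk hzx.symm (by omega), edgeCount_hi hk hzx0.symm (by omega)]
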